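/- Let 𝕊 ⊆ ℝ^ℓ (ℓ ≥ 2) be a state space. Suppose that for every n and every nonempty compact set X ⊆ ℝⁿ whose affine span has dimension at most ℓ − 1, the set ddi(X | 𝕊) is nonempty, and every Y ∈ ddi(X | 𝕊) satisfies U(Y) = Y for every orthogonal linear map U : ℝⁿ → ℝⁿ with U(X) = X. Then 𝕊 is a (hyper)-ellipsoid. -/

import Mathlib

open MeasureTheory Metric Set

noncomputable section

/-- `Euc n` is the Euclidean space `ℝⁿ`. -/
abbrev Euc (n : ℕ) : Type := EuclideanSpace ℝ (Fin n)

/-- A state space of linear dimension `ℓ`: a compact convex set contained in (and affinely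
spanning) an affine hyperplane not through the origin, here written as `{x | f x = 1}`
for a nonzero linear functional `f`. -/
def IsStateSpace {ℓ : ℕ} (𝕊 : Set (Euc ℓ)) : Prop :=
  IsCompact 𝕊 ∧ Convex ℝ 𝕊 ∧
    ∃ f : Euc ℓ →ₗ[ℝ] ℝ, f ≠ 0 ∧
      (affineSpan ℝ 𝕊 : Set (Euc ℓ)) = {x | f x = 1}

/-- `R` is admissible for the data set `X` (w.r.t. the state space `𝕊`): it is the image of `𝕊`
under some linear map and satisfies `X ⊆ R ⊆ aff X`. -/
def Admissible {ℓ n : ℕ} (𝕊 : Set (Euc ℓ)) (X R : Set (Euc n)) : Prop :=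
  (∃ M : Euc ℓ →ₗ[ℝ] Euc n, R = M '' 𝕊) ∧ X ⊆ R ∧ R ⊆ (affineSpan ℝ X : Set (Euc n))

/-- Data-driven inference: the admissible sets for `X` of minimal `d`-dimensional Hausdorff
measure, where `d = dim aff X`. -/
def ddi {ℓ n : ℕ} (X : Set (Euc n)) (𝕊 : Set (Euc ℓ)) : Set (Set (Euc n)) :=
  {R | Admissible 𝕊 X R ∧ ∀ R' : Set (Euc n), Admissible 𝕊 X R' →
      μH[(Module.finrank ℝ (affineSpan ℝ X).direction : ℝ)] R ≤
        μH[(Module.finrank ℝ (affineSpan ℝ X).direction : ℝ)] R'}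

/-- A (hyper)-ellipsoid state space in `ℝ^ℓ`: the image of the closed unit ball of `ℝ^(ℓ-1)`
under an injective affine map. -/
def IsHyperEllipsoid {ℓ : ℕ} (𝕊 : Set (Euc ℓ)) : Prop :=
  ∃ F : Euc (ℓ - 1) →ᵃ[ℝ] Euc ℓ, Function.Injective F ∧ 𝕊 = F '' closedBall 0 1

set_option maxHeartbeats 1000000 in
theorem stmt_2' {ℓ : ℕ} (hℓ : 2 ≤ ℓ) (𝕊 : Set (Euc ℓ)) (hS : IsStateSpace 𝕊)
    (h : ∀ (n : ℕ) (X : Set (Euc n)), X.Nonempty → IsCompact X →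
      Module.finrank ℝ (affineSpan ℝ X).direction ≤ ℓ - 1 →
      (ddi X 𝕊).Nonempty ∧
        ∀ Y ∈ ddi X 𝕊, ∀ U : Euc n ≃ₗᵢ[ℝ] Euc n, U '' X = X → U '' Y = Y) :
    IsHyperEllipsoid 𝕊 := by
  obtain ⟨hScomp, hSconv, f, hf0, hfspan⟩ := hS
  set n := ℓ - 1 with hn
  have hℓn : ℓ = n + 1 := by omega
  haveI : Nonempty (Fin n) := ⟨⟨0, by omega⟩⟩
  haveI : Nontrivial (Euc n) := by
    have h1 : Module.finrank ℝ (Euc n) = n := finrank_euclideanSpace_fin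
    exact Module.finrank_pos_iff.mp (show 0 < Module.finrank ℝ (Euc n) by rw [h1]; omega)
  set X : Set (Euc n) := sphere 0 1 with hXdef
  have hXne : X.Nonempty := NormedSpace.sphere_nonempty.mpr zero_le_one
  have hXcomp : IsCompact X := isCompact_sphere 0 1
  have hXdim : Module.finrank ℝ (affineSpan ℝ X).direction ≤ ℓ - 1 := by
    have h1 := Submodule.finrank_le (affineSpan ℝ X).direction
    rw [finrank_euclideanSpace_fin] at h1
    exact h1
  obtain ⟨hne, hsym⟩ := h n X hXne hXcomp hXdim
  obtain ⟨Y, hYddi⟩ := hne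
  obtain ⟨M, hYM⟩ := hYddi.1.1
  have hXY : X ⊆ Y := hYddi.1.2.1
  have hYcomp : IsCompact Y := by
    rw [hYM]; exact hScomp.image M.continuous_of_finiteDimensional
  have hYconv : Convex ℝ Y := by rw [hYM]; exact hSconv.linear_image M
  -- invariance of Y under all linear isometries
  have hXinv : ∀ U : Euc n ≃ₗᵢ[ℝ] Euc n, U '' X = X := by
    intro U
    ext z
    simp only [hXdef, Set.mem_image, mem_sphere_iff_norm, sub_zero]
    constructor
    · rintro ⟨w, hw, rfl⟩; simpa [U.norm_map] using hw
    · intro hz; exact ⟨U.symm z, by simp [U.symm.norm_map, hz], U.apply_symm_apply z⟩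
  have hYinv : ∀ U : Euc n ≃ₗᵢ[ℝ] Euc n, U '' Y = Y := fun U => hsym Y hYddi U (hXinv U)
  -- maximum norm point
  obtain ⟨y₀, hy₀Y, hy₀max⟩ := hYcomp.exists_isMaxOn ⟨hXne.choose, hXY hXne.choose_spec⟩
    continuous_norm.continuousOn
  set r : ℝ := ‖y₀‖ with hrdef
  have hr1 : 1 ≤ r := by
    obtain ⟨u, hu⟩ := hXne
    rw [hXdef] at hu
    have : ‖u‖ = 1 := by simpa using hu
    calc (1:ℝ) = ‖u‖ := this.symm
    _ ≤ r := hy₀max (hXY hu)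
  have hr0 : (0:ℝ) < r := lt_of_lt_of_le one_pos hr1
  -- sphere of radius r is in Y
  have hsph : ∀ z : Euc n, ‖z‖ = r → z ∈ Y := by
    intro z hz
    have href : (Submodule.reflection (Submodule.span ℝ {y₀ - z})ᗮ) y₀ = z := Submodule.reflection_sub hz.symm
    have := hYinv (Submodule.reflection (Submodule.span ℝ {y₀ - z})ᗮ)
    rw [← this]
    exact ⟨y₀, hy₀Y, href⟩
  -- closed ball of radius r ⊆ Y
  have hball : closedBall (0 : Euc n) r ⊆ Y := by
    intro x hx
    have hxr : ‖x‖ ≤ r := by simpa using hx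
    rcases eq_or_ne x 0 with rfl | hx0
    · obtain ⟨u, hu⟩ := hXne
      rw [hXdef] at hu
      have hu1 : ‖u‖ = 1 := by simpa using hu
      have h1 : (r • u) ∈ Y := hsph _ (by rw [norm_smul, hu1]; simp [abs_of_pos hr0])
      have h2 : (-(r • u)) ∈ Y := hsph _ (by rw [norm_neg, norm_smul, hu1]; simp [abs_of_pos hr0])
      have := hYconv h1 h2 (by norm_num : (0:ℝ) ≤ 1/2) (by norm_num : (0:ℝ) ≤ 1/2) (by norm_num)
      simpa using this
    · have hxn : (0:ℝ) < ‖x‖ := norm_pos_iff.mpr hx0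
      set a : Euc n := (r / ‖x‖) • x with ha
      have hna : ‖a‖ = r := by
        rw [ha, norm_smul, Real.norm_eq_abs, abs_of_pos (by positivity), div_mul_cancel₀ _ (ne_of_gt hxn)]
      have h1 : a ∈ Y := hsph _ hna
      have h2 : (-a) ∈ Y := hsph _ (by rw [norm_neg]; exact hna)
      set t : ℝ := (1 + ‖x‖ / r) / 2 with ht
      have ht0 : 0 ≤ t := by positivity
      have ht1 : 0 ≤ 1 - t := by
        have : ‖x‖ / r ≤ 1 := (div_le_one hr0).mpr hxr
        rw [ht]; linarith
      have := hYconv h1 h2 ht0 ht1 (by ring)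
      have heq : t • a + (1 - t) • (-a) = x := by
        rw [smul_neg, ← sub_eq_add_neg, ← sub_smul, ha, smul_smul]
        have : t - (1 - t) = ‖x‖ / r := by rw [ht]; ring
        rw [this, div_mul_div_comm, mul_comm, ← div_mul_div_comm, div_self (ne_of_gt hr0),
          div_self (ne_of_gt hxn), one_mul, one_smul]
      rwa [heq] at this
  have hYball : Y = closedBall (0 : Euc n) r := by
    apply Subset.antisymm _ hball
    intro y hy
    simpa using (hy₀max hy : ‖y‖ ≤ r)
  have hMS : M '' 𝕊 = closedBall (0 : Euc n) r := by rw [← hYM]; exact hYball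
  -- 𝕊 lies in the hyperplane f = 1
  have hSf : ∀ x ∈ 𝕊, f x = 1 := by
    intro x hx
    have : x ∈ (affineSpan ℝ 𝕊 : Set (Euc ℓ)) := subset_affineSpan ℝ 𝕊 hx
    rw [hfspan] at this
    exact this
  -- point x₀ ∈ 𝕊 with M x₀ = 0
  have h0ball : (0 : Euc n) ∈ closedBall (0 : Euc n) r := by
    simpa using le_of_lt hr0
  rw [← hMS] at h0ball
  obtain ⟨x₀, hx₀S, hMx₀⟩ := h0ball
  -- the image of ker f under M is everything
  set W : Submodule ℝ (Euc n) := (LinearMap.ker f).map M with hWdef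
  have hballW : ∀ z ∈ closedBall (0 : Euc n) r, z ∈ W := by
    intro z hz
    rw [← hMS] at hz
    obtain ⟨x, hxS, hMx⟩ := hz
    refine ⟨x - x₀, ?_, by rw [map_sub, hMx₀, sub_zero, hMx]⟩
    simp only [SetLike.mem_coe, LinearMap.mem_ker, map_sub, hSf x hxS, hSf x₀ hx₀S, sub_self]
  have hW : W = ⊤ := by
    rw [Submodule.eq_top_iff']
    intro z
    rcases eq_or_ne z 0 with rfl | hz0
    · exact W.zero_mem
    · have hzn : (0:ℝ) < ‖z‖ := norm_pos_iff.mpr hz0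
      have hmem : (r / ‖z‖) • z ∈ W := by
        apply hballW
        simp only [mem_closedBall, dist_zero_right, norm_smul, Real.norm_eq_abs,
          abs_of_pos (show (0:ℝ) < r / ‖z‖ by positivity)]
        rw [div_mul_cancel₀ _ (ne_of_gt hzn)]
      have := W.smul_mem (‖z‖ / r) hmem
      rwa [smul_smul, div_mul_div_comm, mul_comm ‖z‖ r, div_self (by positivity), one_smul] at this
  -- L : ker f → Euc n is bijective
  set L : (LinearMap.ker f) →ₗ[ℝ] Euc n := M ∘ₗ (LinearMap.ker f).subtype with hLdef
  have hLrange : LinearMap.range L = ⊤ := by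
    rw [hLdef, LinearMap.range_comp, Submodule.range_subtype, ← hWdef, hW]
  have hLsurj : Function.Surjective L := LinearMap.range_eq_top.mp hLrange
  have hkerf : Module.finrank ℝ (LinearMap.ker f) = n := by
    have hfsurj : Function.Surjective f := by
      obtain ⟨v, hv⟩ : ∃ v, f v ≠ 0 := by
        by_contra hc
        push_neg at hc
        exact hf0 (LinearMap.ext fun v => by simp [hc v])
      intro c
      exact ⟨(c * (f v)⁻¹) • v, by simp [mul_assoc, inv_mul_cancel₀ hv]⟩
    have h1 := LinearMap.finrank_range_add_finrank_ker f
    rw [LinearMap.range_eq_top.mpr hfsurj, finrank_top, Module.finrank_self,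
      finrank_euclideanSpace_fin] at h1
    omega
  have hLinj : Function.Injective L := by
    rw [← LinearMap.ker_eq_bot]
    have h1 := LinearMap.finrank_range_add_finrank_ker L
    rw [hLrange, finrank_top, finrank_euclideanSpace_fin, hkerf] at h1
    exact Submodule.finrank_eq_zero.mp (by omega)
  set e : (LinearMap.ker f) ≃ₗ[ℝ] Euc n := LinearEquiv.ofBijective L ⟨hLinj, hLsurj⟩ with hedef
  -- build the affine map
  set G : Euc n →ₗ[ℝ] Euc ℓ :=
    (LinearMap.ker f).subtype ∘ₗ (e.symm : Euc n →ₗ[ℝ] LinearMap.ker f) ∘ₗ (r • LinearMap.id)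
    with hGdef
  set F : Euc n →ᵃ[ℝ] Euc ℓ :=
    { toFun := fun y => G y + x₀
      linear := G
      map_vadd' := by
        intro p v
        simp only [vadd_eq_add, map_add]
        abel } with hFdef
  have hFapp : ∀ y : Euc n, F y = ((e.symm (r • y) : LinearMap.ker f) : Euc ℓ) + x₀ := by
    intro y
    simp [hFdef, hGdef]
  -- key computation
  have hkey : ∀ x ∈ 𝕊, F (r⁻¹ • M x) = x := by
    intro x hxS
    have hv : x - x₀ ∈ LinearMap.ker f := by
      simp only [LinearMap.mem_ker, map_sub, hSf x hxS, hSf x₀ hx₀S, sub_self]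
    have hLv : L ⟨x - x₀, hv⟩ = M x := by
      simp [hLdef, map_sub, hMx₀]
    have hsmul : r • (r⁻¹ • M x) = M x := by
      rw [smul_smul, mul_inv_cancel₀ (ne_of_gt hr0), one_smul]
    rw [hFapp, hsmul, ← hLv]
    have : e.symm (L ⟨x - x₀, hv⟩) = ⟨x - x₀, hv⟩ := by
      have := e.symm_apply_apply ⟨x - x₀, hv⟩
      rwa [show e ⟨x - x₀, hv⟩ = L ⟨x - x₀, hv⟩ from LinearEquiv.ofBijective_apply _ _] at this
    rw [this]
    simp
  refine ⟨F, ?_, ?_⟩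
  · -- injectivity
    intro y₁ y₂ hy
    rw [hFapp, hFapp] at hy
    have h1 : ((e.symm (r • y₁) : LinearMap.ker f) : Euc ℓ)
        = ((e.symm (r • y₂) : LinearMap.ker f) : Euc ℓ) := by
      have := add_right_cancel hy
      exact this
    have h2 : e.symm (r • y₁) = e.symm (r • y₂) := Subtype.coe_injective h1
    have h3 : r • y₁ = r • y₂ := e.symm.injective h2
    exact smul_right_injective (Euc n) (ne_of_gt hr0) h3
  · -- 𝕊 = F '' closedBall 0 1
    apply Subset.antisymm
    · intro x hxS
      refine ⟨r⁻¹ • M x, ?_, hkey x hxS⟩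
      have hMx : M x ∈ closedBall (0 : Euc n) r := by rw [← hMS]; exact ⟨x, hxS, rfl⟩
      have : ‖M x‖ ≤ r := by simpa using hMx
      simp only [mem_closedBall, dist_zero_right, norm_smul, Real.norm_eq_abs,
        abs_of_pos (inv_pos.mpr hr0)]
      rw [← div_eq_inv_mul]
      exact (div_le_one hr0).mpr this
    · rintro x ⟨y, hy, rfl⟩
      have hry : r • y ∈ closedBall (0 : Euc n) r := by
        have : ‖y‖ ≤ 1 := by simpa using hy
        simp only [mem_closedBall, dist_zero_right, norm_smul, Real.norm_eq_abs,
          abs_of_pos hr0]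
        calc r * ‖y‖ ≤ r * 1 := mul_le_mul_of_nonneg_left this (le_of_lt hr0)
        _ = r := mul_one r
      rw [← hMS] at hry
      obtain ⟨x, hxS, hMx⟩ := hry
      have : y = r⁻¹ • M x := by rw [hMx, inv_smul_smul₀ (ne_of_gt hr0)]
      rw [this]
      rw [hkey x hxS]
      exact hxS


theorem stmt_2 {ℓ : ℕ} (hℓ : 2 ≤ ℓ) (𝕊 : Set (Euc ℓ)) (hS : IsStateSpace 𝕊)
    (h : ∀ (n : ℕ) (X : Set (Euc n)), X.Nonempty → IsCompact X →
      Module.finrank ℝ (affineSpan ℝ X).direction ≤ ℓ - 1 →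
      (ddi X 𝕊).Nonempty ∧
        ∀ Y ∈ ddi X 𝕊, ∀ U : Euc n ≃ₗᵢ[ℝ] Euc n, U '' X = X → U '' Y = Y) :
    IsHyperEllipsoid 𝕊 := stmt_2' hℓ 𝕊 hS h
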